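/- Let κ, c_s, c_p > 0, n ∈ ℕ, let x : ℝ → ℝ² be continuously differentiable, and let s ∈ ℝ with x'(s) ≠ 0. Then x(σ) ≠ x(s) for all σ ≠ s sufficiently close to s, and lim_{σ → s, σ ≠ s} (1/2)[ η_{1,n}(|x(s) − x(σ)|) I + η_{2,n}(|x(s) − x(σ)|) J(x(s) − x(σ)) ] = −(1/4)(1/c_p² + 1/c_s²) I, where I is the 2×2 identity matrix and J(z) = z z^⊤/|z|². -/

import Mathlib

open Real Filter MeasureTheory

noncomputable def acoef (γ : ℝ) : ℕ → ℕ → ℝ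
  | n, m =>
    if m = 0 then 1
    else if n < m then 0
    else if m = n then -(γ / (n : ℝ)) * acoef γ (n - 1) (n - 1)
    else (1 / (2 * γ * (m : ℝ))) *
      (4 * (((m + 1) / 2 : ℕ) : ℝ) ^ 2 * acoef γ n (m + 1)
        - γ ^ 2 * ∑ k ∈ (Finset.Icc (m - 1) (n - 1)).attach,
            ((n - (k : ℕ) + 1 : ℕ) : ℝ) * acoef γ (k : ℕ) (m - 1))
  termination_by n m => (n, n - m)
  decreasing_by
  · apply Prod.Lex.left; omega
  · apply Prod.Lex.right; omega
  · apply Prod.Lex.left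
    have hk := k.2
    simp only [Finset.mem_Icc] at hk
    omega

/-- χ_{k,n} -/
noncomputable def chiC (n : ℕ) (k : ℤ) : ℝ :=
  if k = -2 then (n : ℝ) * ((n : ℝ) - 1)
  else if k = -1 then -4 * (n : ℝ) ^ 2
  else if k = 0 then 2 * (3 * (n : ℝ) ^ 2 + 3 * (n : ℝ) + 1)
  else if k = 1 then -4 * ((n : ℝ) + 1) ^ 2
  else if k = 2 then ((n : ℝ) + 1) * ((n : ℝ) + 2)
  else 0

/-- the sum ∑_{k=-2}^{2} χ_{k,n} f(n+k), terms with n+k<0 omitted -/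
noncomputable def sumChi (n : ℕ) (f : ℕ → ℝ) : ℝ :=
  ∑ k ∈ Finset.Icc (-2 : ℤ) 2,
    if 0 ≤ (n : ℤ) + k then chiC n k * f ((n : ℤ) + k).toNat else 0

noncomputable def besselI0 (z : ℝ) : ℝ := ∑' k : ℕ, (z / 2) ^ (2 * k) / (k.factorial : ℝ) ^ 2

noncomputable def besselI1 (z : ℝ) : ℝ :=
  ∑' k : ℕ, (z / 2) ^ (2 * k + 1) / ((k.factorial : ℝ) * ((k + 1).factorial : ℝ))

noncomputable def psiH (k : ℕ) : ℝ := ∑ j ∈ Finset.range k, (1 : ℝ) / ((j : ℝ) + 1)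

noncomputable def besselS0 (z : ℝ) : ℝ :=
  ∑' k : ℕ, psiH k * (z / 2) ^ (2 * k) / (k.factorial : ℝ) ^ 2

noncomputable def besselS1 (z : ℝ) : ℝ :=
  -(1 / 2) * ∑' k : ℕ, (psiH (k + 1) + psiH k) * (z / 2) ^ (2 * k + 1) /
    ((k.factorial : ℝ) * ((k + 1).factorial : ℝ))

noncomputable def vPol (γ : ℝ) (n : ℕ) (r : ℝ) : ℝ :=
  ∑ m ∈ Finset.range (n / 2 + 1), acoef γ n (2 * m) * r ^ (2 * m)

noncomputable def wPol (γ : ℝ) (n : ℕ) (r : ℝ) : ℝ :=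
  ∑ m ∈ Finset.range ((n - 1) / 2 + 1), acoef γ n (2 * m + 1) * r ^ (2 * m + 1)

noncomputable def vTil (γ : ℝ) (n : ℕ) (r : ℝ) : ℝ :=
  2 * ∑ m ∈ Finset.Icc 1 (n / 2), (m : ℝ) * acoef γ n (2 * m) * r ^ (2 * m)
    - γ * ∑ m ∈ Finset.range ((n - 1) / 2 + 1), acoef γ n (2 * m + 1) * r ^ (2 * m + 2)

noncomputable def wTil (γ : ℝ) (n : ℕ) (r : ℝ) : ℝ :=
  2 * ∑ m ∈ Finset.Icc 1 ((n - 1) / 2), (m : ℝ) * acoef γ n (2 * m + 1) * r ^ (2 * m + 1)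
    - γ * ∑ m ∈ Finset.range (n / 2 + 1), acoef γ n (2 * m) * r ^ (2 * m + 1)

noncomputable def phiF (γ : ℝ) (n : ℕ) (r : ℝ) : ℝ :=
  -besselI0 (γ * r) * vPol γ n r + besselI1 (γ * r) * wPol γ n r

noncomputable def phiHat (γ : ℝ) (n : ℕ) (r : ℝ) : ℝ :=
  (-(Real.eulerMascheroniConstant + Real.log (γ / 2)) * besselI0 (γ * r) + besselS0 (γ * r)) * vPol γ n r
    + (1 / (γ * r) + (Real.eulerMascheroniConstant + Real.log (γ / 2)) * besselI1 (γ * r)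
        + besselS1 (γ * r)) * wPol γ n r

noncomputable def phiTil (γ : ℝ) (n : ℕ) (r : ℝ) : ℝ :=
  -besselI0 (γ * r) * vTil γ n r + besselI1 (γ * r) * wTil γ n r

noncomputable def phiHatTil (γ : ℝ) (n : ℕ) (r : ℝ) : ℝ :=
  (-(Real.eulerMascheroniConstant + Real.log (γ / 2)) * besselI0 (γ * r) + besselS0 (γ * r)) * vTil γ n r
    + (1 / (γ * r) + (Real.eulerMascheroniConstant + Real.log (γ / 2)) * besselI1 (γ * r)
        + besselS1 (γ * r)) * wTil γ n r

noncomputable def etaF (κ cs cp : ℝ) (ℓ n : ℕ) (r : ℝ) : ℝ :=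
  (-(ℓ : ℝ)) ^ (ℓ - 1) / (κ ^ 2 * r ^ 2) *
      sumChi n (fun j => phiF (κ / cs) j r - phiF (κ / cp) j r)
    + (-1 : ℝ) ^ (ℓ - 1) / cp ^ 2 * phiF (κ / cp) n r
    + ((ℓ : ℝ) - 1) / cs ^ 2 * phiF (κ / cs) n r

noncomputable def xiF (κ cs cp : ℝ) (ℓ n : ℕ) (r : ℝ) : ℝ :=
  (-(ℓ : ℝ)) ^ (ℓ - 1) / (κ ^ 2 * r ^ 2) *
      sumChi n (fun j => phiHat (κ / cs) j r - phiHat (κ / cp) j r)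
    + (-1 : ℝ) ^ (ℓ - 1) / cp ^ 2 * phiHat (κ / cp) n r
    + ((ℓ : ℝ) - 1) / cs ^ 2 * phiHat (κ / cs) n r

noncomputable def etaTil (κ cs cp : ℝ) (ℓ n : ℕ) (r : ℝ) : ℝ :=
  (-(ℓ : ℝ)) ^ (ℓ - 1) / (κ ^ 2 * r ^ 2) *
      sumChi n (fun j => phiTil (κ / cs) j r - 2 * phiF (κ / cs) j r
        + 2 * phiF (κ / cp) j r - phiTil (κ / cp) j r)
    + (-1 : ℝ) ^ (ℓ - 1) / cp ^ 2 * phiTil (κ / cp) n r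
    + ((ℓ : ℝ) - 1) / cs ^ 2 * phiTil (κ / cs) n r

noncomputable def xiTil (κ cs cp : ℝ) (ℓ n : ℕ) (r : ℝ) : ℝ :=
  (-(ℓ : ℝ)) ^ (ℓ - 1) / (κ ^ 2 * r ^ 2) *
      sumChi n (fun j => phiHatTil (κ / cs) j r - 2 * phiHat (κ / cs) j r
        + 2 * phiHat (κ / cp) j r - phiHatTil (κ / cp) j r)
    + (-1 : ℝ) ^ (ℓ - 1) / cp ^ 2 * phiHatTil (κ / cp) n r
    + ((ℓ : ℝ) - 1) / cs ^ 2 * phiHatTil (κ / cs) n r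

/-- Euclidean norm on ℝ² (represented as `Fin 2 → ℝ`). -/
noncomputable def nrm2 (z : Fin 2 → ℝ) : ℝ := Real.sqrt (z 0 ^ 2 + z 1 ^ 2)

/-- Euclidean inner product on ℝ². -/
noncomputable def dot2 (a b : Fin 2 → ℝ) : ℝ := a 0 * b 0 + a 1 * b 1

/-- identity matrix entries -/
noncomputable def idm (i j : Fin 2) : ℝ := if i = j then 1 else 0

/-- J(z) = z zᵀ / |z|² -/
noncomputable def Jmat (z : Fin 2 → ℝ) (i j : Fin 2) : ℝ := z i * z j / nrm2 z ^ 2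

/-- U₁(x,y) = λ ν (x−y)ᵀ + μ (x−y) νᵀ + μ (ν·(x−y)) I -/
noncomputable def U1mat (lam mu : ℝ) (ν x y : Fin 2 → ℝ) (i j : Fin 2) : ℝ :=
  lam * ν i * (x j - y j) + mu * (x i - y i) * ν j + mu * dot2 ν (x - y) * idm i j

/-- U₂(x,y) = (λ+2μ) ν (x−y)ᵀ + μ (x−y) νᵀ + μ (ν·(x−y)) (I − 4J(x−y)) -/
noncomputable def U2mat (lam mu : ℝ) (ν x y : Fin 2 → ℝ) (i j : Fin 2) : ℝ :=
  (lam + 2 * mu) * ν i * (x j - y j) + mu * (x i - y i) * ν j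
    + mu * dot2 ν (x - y) * (idm i j - 4 * Jmat (x - y) i j)


lemma acoef_zero (γ : ℝ) (n : ℕ) : acoef γ n 0 = 1 := by rw [acoef]; simp

lemma acoef_of_lt (γ : ℝ) {n m : ℕ} (h : n < m) (hm : m ≠ 0) : acoef γ n m = 0 := by
  rw [acoef]; simp [hm, h, Nat.ne_of_gt h]

lemma acoef_one_one (γ : ℝ) : acoef γ 1 1 = -γ := by
  rw [acoef]; simp [acoef_zero]

lemma natSum : ∀ j : ℕ, (∑ k ∈ Finset.range j, ((j - k + 1 : ℕ) : ℝ)) = (j : ℝ) * ((j : ℝ) + 3) / 2 := by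
  intro j
  induction j with
  | zero => simp
  | succ d ih =>
    rw [Finset.sum_range_succ]
    have hcongr : ∑ k ∈ Finset.range d, ((d + 1 - k + 1 : ℕ) : ℝ)
        = ∑ k ∈ Finset.range d, (((d - k + 1 : ℕ) : ℝ) + 1) := by
      refine Finset.sum_congr rfl fun k hk => ?_
      have hk' := Finset.mem_range.mp hk
      have : d + 1 - k + 1 = (d - k + 1) + 1 := by omega
      rw [this]; push_cast; ring
    have hlast : d + 1 - d + 1 = 2 := by omega
    rw [hcongr, Finset.sum_add_distrib, Finset.sum_const, Finset.card_range, nsmul_eq_mul, mul_one, hlast, ih]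
    push_cast
    ring

lemma acoef_one (γ : ℝ) (hγ : γ ≠ 0) (d : ℕ) :
    acoef γ (d + 2) 1 = 1 / (2 * γ) * (4 * acoef γ (d + 2) 2
      - γ ^ 2 * (((d : ℝ) + 2) * ((d : ℝ) + 5) / 2)) := by
  rw [acoef]
  have h1 : ¬ (d + 2 < 1) := by omega
  have h2 : (1 : ℕ) ≠ d + 2 := by omega
  simp only [if_neg (by omega : (1:ℕ) ≠ 0), if_neg h1, if_neg h2, Nat.cast_ofNat]
  have hattach : ∑ k ∈ (Finset.Icc (1-1) (d+2-1)).attach,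
      ((d + 2 - (k : ℕ) + 1 : ℕ) : ℝ) * acoef γ (k : ℕ) (1-1)
      = ∑ k ∈ Finset.Icc 0 (d+1), ((d + 2 - k + 1 : ℕ) : ℝ) := by
    rw [Finset.sum_attach (Finset.Icc (1-1) (d+2-1))
      (fun k => ((d + 2 - k + 1 : ℕ) : ℝ) * acoef γ k (1-1))]
    refine Finset.sum_congr rfl fun k _ => ?_
    simp [acoef_zero]
  rw [hattach]
  have hIcc : Finset.Icc 0 (d+1) = Finset.range (d+2) := by
    rw [Finset.range_eq_Ico]
    exact (Finset.Ico_add_one_right_eq_Icc 0 (d+1)).symm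
  have hsum : ∑ k ∈ Finset.Icc 0 (d+1), ((d + 2 - k + 1 : ℕ) : ℝ)
      = ((d : ℝ) + 2) * ((d : ℝ) + 5) / 2 := by
    rw [hIcc, natSum (d+2)]
    push_cast
    ring
  rw [hsum]
  norm_num

lemma acoef_key (γ : ℝ) (hγ : γ ≠ 0) (j : ℕ) :
    -acoef γ j 2 + (γ / 2) * acoef γ j 1 = -(γ ^ 2 * ((j : ℝ) * ((j : ℝ) + 3)) / 8) := by
  match j with
  | 0 => simp [acoef_of_lt γ (by omega : 0 < 2) (by omega), acoef_of_lt γ (by omega : 0 < 1) (by omega)]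
  | 1 =>
    rw [acoef_of_lt γ (by omega : 1 < 2) (by omega), acoef_one_one]
    push_cast; ring
  | (d + 2) =>
    rw [acoef_one γ hγ d]
    push_cast
    field_simp
    ring

lemma sumChi_congr (n : ℕ) (f g : ℕ → ℝ) (h : ∀ j, f j = g j) : sumChi n f = sumChi n g := by
  have : f = g := funext h
  rw [this]

lemma sumChi_sub (n : ℕ) (f g : ℕ → ℝ) :
    sumChi n (fun j => f j - g j) = sumChi n f - sumChi n g := by
  unfold sumChi
  rw [← Finset.sum_sub_distrib]
  refine Finset.sum_congr rfl fun k _ => ?_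
  split_ifs <;> ring

lemma sumChi_add (n : ℕ) (f g : ℕ → ℝ) :
    sumChi n (fun j => f j + g j) = sumChi n f + sumChi n g := by
  unfold sumChi
  rw [← Finset.sum_add_distrib]
  refine Finset.sum_congr rfl fun k _ => ?_
  split_ifs <;> ring

lemma sumChi_const_mul (n : ℕ) (c : ℝ) (f : ℕ → ℝ) :
    sumChi n (fun j => c * f j) = c * sumChi n f := by
  unfold sumChi
  rw [Finset.mul_sum]
  refine Finset.sum_congr rfl fun k _ => ?_
  split_ifs <;> ring

lemma Icc_expand : Finset.Icc (-2 : ℤ) 2 = {-2, -1, 0, 1, 2} := by decide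

lemma sumChi_expand (m : ℕ) (f : ℕ → ℝ) :
    sumChi (m + 2) f = chiC (m+2) (-2) * f m + chiC (m+2) (-1) * f (m+1)
      + chiC (m+2) 0 * f (m+2) + chiC (m+2) 1 * f (m+3) + chiC (m+2) 2 * f (m+4) := by
  unfold sumChi
  rw [Icc_expand]
  rw [Finset.sum_insert (by decide), Finset.sum_insert (by decide),
    Finset.sum_insert (by decide), Finset.sum_insert (by decide), Finset.sum_singleton]
  rw [if_pos (by omega), if_pos (by omega), if_pos (by omega), if_pos (by omega),
    if_pos (by omega)]
  rw [show (((m+2:ℕ):ℤ) + (-2)).toNat = m from by omega,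
      show (((m+2:ℕ):ℤ) + (-1)).toNat = m+1 from by omega,
      show (((m+2:ℕ):ℤ) + 0).toNat = m+2 from by omega,
      show (((m+2:ℕ):ℤ) + 1).toNat = m+3 from by omega,
      show (((m+2:ℕ):ℤ) + 2).toNat = m+4 from by omega]
  ring

lemma sumChi_expand0 (f : ℕ → ℝ) :
    sumChi 0 f = chiC 0 0 * f 0 + chiC 0 1 * f 1 + chiC 0 2 * f 2 := by
  unfold sumChi
  rw [Icc_expand]
  rw [Finset.sum_insert (by decide), Finset.sum_insert (by decide),
    Finset.sum_insert (by decide), Finset.sum_insert (by decide), Finset.sum_singleton]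
  rw [if_neg (by omega), if_neg (by omega), if_pos (by omega), if_pos (by omega),
    if_pos (by omega)]
  rw [show (((0:ℕ):ℤ) + 0).toNat = 0 from by omega,
      show (((0:ℕ):ℤ) + 1).toNat = 1 from by omega,
      show (((0:ℕ):ℤ) + 2).toNat = 2 from by omega]
  ring

lemma sumChi_expand1 (f : ℕ → ℝ) :
    sumChi 1 f = chiC 1 (-1) * f 0 + chiC 1 0 * f 1 + chiC 1 1 * f 2 + chiC 1 2 * f 3 := by
  unfold sumChi
  rw [Icc_expand]
  rw [Finset.sum_insert (by decide), Finset.sum_insert (by decide),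
    Finset.sum_insert (by decide), Finset.sum_insert (by decide), Finset.sum_singleton]
  rw [if_neg (by omega), if_pos (by omega), if_pos (by omega), if_pos (by omega),
    if_pos (by omega)]
  rw [show (((1:ℕ):ℤ) + (-1)).toNat = 0 from by omega,
      show (((1:ℕ):ℤ) + 0).toNat = 1 from by omega,
      show (((1:ℕ):ℤ) + 1).toNat = 2 from by omega,
      show (((1:ℕ):ℤ) + 2).toNat = 3 from by omega]
  ring

lemma sumChi_one (n : ℕ) : sumChi n (fun _ => (1 : ℝ)) = 0 := by
  match n with
  | 0 => rw [sumChi_expand0]; norm_num [chiC]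
  | 1 => rw [sumChi_expand1]; norm_num [chiC]
  | (m + 2) => rw [sumChi_expand]; norm_num [chiC]; try (push_cast; ring)

lemma sumChi_quad (n : ℕ) : sumChi n (fun j => (j : ℝ) * ((j : ℝ) + 3)) = 4 := by
  match n with
  | 0 => rw [sumChi_expand0]; norm_num [chiC]
  | 1 => rw [sumChi_expand1]; norm_num [chiC]
  | (m + 2) => rw [sumChi_expand]; norm_num [chiC]; try (push_cast; ring)

noncomputable def besselG (z : ℝ) : ℝ :=
  ∑' k : ℕ, (z ^ 2 / 4) ^ k / ((k.factorial : ℝ) * ((k + 1).factorial : ℝ))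

lemma fact_one_le (k : ℕ) : (1 : ℝ) ≤ (k.factorial : ℝ) := by
  exact_mod_cast Nat.one_le_iff_ne_zero.mpr (Nat.factorial_ne_zero k)

lemma one_le_d (d : ℕ → ℝ) (hd : ∀ k, (k.factorial : ℝ) ≤ d k) (k : ℕ) : (1 : ℝ) ≤ d k :=
  le_trans (fact_one_le k) (hd k)

lemma aux_summable (d : ℕ → ℝ) (hd : ∀ k, (k.factorial : ℝ) ≤ d k) (q : ℝ) (hq : 0 ≤ q) :
    Summable (fun k : ℕ => q ^ k / d k) := by
  refine Summable.of_nonneg_of_le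
    (fun k => div_nonneg (pow_nonneg hq k) (le_trans zero_le_one (one_le_d d hd k)))
    (fun k => ?_) (Real.summable_pow_div_factorial q)
  exact div_le_div_of_nonneg_left (pow_nonneg hq k)
    (by exact_mod_cast k.factorial_pos) (hd k)

lemma aux_one_le (d : ℕ → ℝ) (hd : ∀ k, (k.factorial : ℝ) ≤ d k) (hd0 : d 0 = 1)
    (q : ℝ) (hq : 0 ≤ q) : (1 : ℝ) ≤ ∑' k : ℕ, q ^ k / d k := by
  have h := Summable.le_tsum (aux_summable d hd q hq) 0
    (fun j _ => div_nonneg (pow_nonneg hq j) (le_trans zero_le_one (one_le_d d hd j)))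
  simpa [hd0] using h

lemma aux_le (d : ℕ → ℝ) (hd : ∀ k, (k.factorial : ℝ) ≤ d k) (q : ℝ) (hq : 0 ≤ q)
    (hq1 : q < 1) : (∑' k : ℕ, q ^ k / d k) ≤ (1 - q)⁻¹ := by
  rw [← tsum_geometric_of_lt_one hq hq1]
  refine Summable.tsum_le_tsum (fun k => ?_) (aux_summable d hd q hq)
    (summable_geometric_of_lt_one hq hq1)
  exact div_le_self (pow_nonneg hq k) (one_le_d d hd k)

lemma aux_tendsto (d : ℕ → ℝ) (hd : ∀ k, (k.factorial : ℝ) ≤ d k) (hd0 : d 0 = 1) :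
    Tendsto (fun z : ℝ => ∑' k : ℕ, (z ^ 2 / 4) ^ k / d k) (nhds 0) (nhds 1) := by
  have hbound : ∀ᶠ z : ℝ in nhds 0, |z| < 1 := by
    have : Tendsto (fun z : ℝ => |z|) (nhds 0) (nhds 0) := by
      simpa using (continuous_abs.tendsto (0 : ℝ))
    exact this.eventually_lt_const one_pos
  refine tendsto_of_tendsto_of_tendsto_of_le_of_le'
    (tendsto_const_nhds : Tendsto (fun _ : ℝ => (1:ℝ)) (nhds 0) (nhds 1))
    (h := fun z : ℝ => (1 - z ^ 2 / 4)⁻¹) ?_ ?_ ?_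
  · have hcont : ContinuousAt (fun z : ℝ => (1 - z ^ 2 / 4)⁻¹) 0 := by
      apply ContinuousAt.inv₀
      · fun_prop
      · norm_num
    simpa using hcont.tendsto
  · filter_upwards with z
    exact aux_one_le d hd hd0 (z ^ 2 / 4) (by positivity)
  · filter_upwards [hbound] with z hz
    have h1 : z ^ 2 / 4 < 1 := by nlinarith [abs_nonneg z, sq_abs z]
    exact aux_le d hd (z ^ 2 / 4) (by positivity) h1


lemma besselI0_eq (z : ℝ) :
    besselI0 z = ∑' k : ℕ, (z ^ 2 / 4) ^ k / ((k.factorial : ℝ) ^ 2) := by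
  unfold besselI0
  refine tsum_congr fun k => ?_
  rw [pow_mul]
  norm_num [div_pow]

lemma besselI1_eq (z : ℝ) : besselI1 z = (z / 2) * besselG z := by
  unfold besselI1 besselG
  rw [← tsum_mul_left]
  refine tsum_congr fun k => ?_
  rw [pow_succ, pow_mul, div_pow]
  field_simp
  ring

lemma tendsto_besselI0 : Tendsto besselI0 (nhds 0) (nhds 1) := by
  have h := aux_tendsto (fun k => (k.factorial : ℝ) ^ 2)
    (fun k => show (k.factorial:ℝ) ≤ (k.factorial:ℝ)^2 from by nlinarith [fact_one_le k]) (by norm_num)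
  refine h.congr fun z => ?_
  exact (besselI0_eq z).symm

lemma tendsto_besselG : Tendsto besselG (nhds 0) (nhds 1) := by
  have h := aux_tendsto (fun k => (k.factorial : ℝ) * ((k + 1).factorial : ℝ))
    (fun k => show (k.factorial:ℝ) ≤ (k.factorial:ℝ) * ((k+1).factorial:ℝ) from by nlinarith [fact_one_le k, fact_one_le (k+1)]) (by norm_num [Nat.factorial])
  exact h

-- ## Polynomial tails

noncomputable def vTail (γ : ℝ) (j : ℕ) (r : ℝ) : ℝ :=
  ∑ m ∈ Finset.range (j / 2), acoef γ j (2 * m + 2) * r ^ (2 * m)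

noncomputable def wTail (γ : ℝ) (j : ℕ) (r : ℝ) : ℝ :=
  ∑ m ∈ Finset.range ((j - 1) / 2 + 1), acoef γ j (2 * m + 1) * r ^ (2 * m)

lemma vPol_eq (γ : ℝ) (j : ℕ) (r : ℝ) : vPol γ j r = 1 + r ^ 2 * vTail γ j r := by
  unfold vPol vTail
  rw [Finset.sum_range_succ', Finset.mul_sum]
  have h0 : acoef γ j (2 * 0) * r ^ (2 * 0) = 1 := by simp [acoef_zero]
  rw [h0, add_comm]
  congr 1
  refine Finset.sum_congr rfl fun m _ => ?_
  have h1 : 2 * (m + 1) = 2 * m + 2 := by ring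
  rw [h1, pow_add]
  ring

lemma wPol_eq (γ : ℝ) (j : ℕ) (r : ℝ) : wPol γ j r = r * wTail γ j r := by
  unfold wPol wTail
  rw [Finset.mul_sum]
  refine Finset.sum_congr rfl fun m _ => ?_
  rw [pow_succ]
  ring

lemma eval_zero_sum (N : ℕ) (c : ℕ → ℝ) :
    ∑ m ∈ Finset.range (N + 1), c m * (0 : ℝ) ^ (2 * m) = c 0 := by
  rw [Finset.sum_range_succ']
  have h : ∀ m ∈ Finset.range N, c (m + 1) * (0 : ℝ) ^ (2 * (m + 1)) = 0 := by
    intro m _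
    rw [zero_pow (by omega : 2 * (m + 1) ≠ 0)]
    ring
  rw [Finset.sum_congr rfl h]
  simp

lemma vTail_zero (γ : ℝ) (j : ℕ) : vTail γ j 0 = acoef γ j 2 := by
  unfold vTail
  by_cases hj : j < 2
  · have h : j / 2 = 0 := by omega
    rw [h]
    simp [acoef_of_lt γ hj (by omega)]
  · obtain ⟨d, hd⟩ : ∃ d, j / 2 = d + 1 := ⟨j / 2 - 1, by omega⟩
    have := eval_zero_sum d (fun m => acoef γ j (2 * m + 2))
    rw [hd]
    simpa using this

lemma wTail_zero (γ : ℝ) (j : ℕ) : wTail γ j 0 = acoef γ j 1 := by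
  unfold wTail
  rw [eval_zero_sum (c := fun m => acoef γ j (2 * m + 1))]

lemma vTail_cont (γ : ℝ) (j : ℕ) : Continuous (fun r => vTail γ j r) := by
  unfold vTail
  exact continuous_finset_sum _ fun m _ => continuous_const.mul (continuous_pow _)

lemma wTail_cont (γ : ℝ) (j : ℕ) : Continuous (fun r => wTail γ j r) := by
  unfold wTail
  exact continuous_finset_sum _ fun m _ => continuous_const.mul (continuous_pow _)

lemma vPol_cont (γ : ℝ) (j : ℕ) : Continuous (fun r => vPol γ j r) := by
  unfold vPol
  exact continuous_finset_sum _ fun m _ => continuous_const.mul (continuous_pow _)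

lemma wPol_cont (γ : ℝ) (j : ℕ) : Continuous (fun r => wPol γ j r) := by
  unfold wPol
  exact continuous_finset_sum _ fun m _ => continuous_const.mul (continuous_pow _)

lemma sumChi_cont (n : ℕ) (F : ℕ → ℝ → ℝ) (hF : ∀ j, Continuous (F j)) :
    Continuous (fun r => sumChi n (fun j => F j r)) := by
  unfold sumChi
  refine continuous_finset_sum _ fun k _ => ?_
  by_cases h : 0 ≤ (n : ℤ) + k
  · simp only [if_pos h]
    exact continuous_const.mul (hF _)
  · simp only [if_neg h]
    exact continuous_const

-- ## Limits of phiF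

lemma tendsto_mul_right (γ : ℝ) :
    Tendsto (fun r : ℝ => γ * r) (nhdsWithin 0 (Set.Ioi 0)) (nhds 0) := by
  have h : Tendsto (fun r : ℝ => γ * r) (nhds 0) (nhds (γ * 0)) :=
    (continuous_const.mul continuous_id).tendsto 0
  rw [mul_zero] at h
  exact h.mono_left nhdsWithin_le_nhds

lemma tendsto_phiF (γ : ℝ) (j : ℕ) :
    Tendsto (fun r => phiF γ j r) (nhdsWithin 0 (Set.Ioi 0)) (nhds (-1)) := by
  have hγr := tendsto_mul_right γ
  have hI0 : Tendsto (fun r => besselI0 (γ * r)) (nhdsWithin 0 (Set.Ioi 0)) (nhds 1) :=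
    tendsto_besselI0.comp hγr
  have hG : Tendsto (fun r => besselG (γ * r)) (nhdsWithin 0 (Set.Ioi 0)) (nhds 1) :=
    tendsto_besselG.comp hγr
  have hI1 : Tendsto (fun r => besselI1 (γ * r)) (nhdsWithin 0 (Set.Ioi 0)) (nhds 0) := by
    have h := (hγr.div_const 2).mul hG
    rw [show (0 : ℝ) / 2 * 1 = 0 by ring] at h
    exact h.congr fun r => (besselI1_eq (γ * r)).symm
  have hv : Tendsto (fun r => vPol γ j r) (nhdsWithin 0 (Set.Ioi 0)) (nhds 1) := by
    have h : Tendsto (fun r => vPol γ j r) (nhdsWithin 0 (Set.Ioi 0)) (nhds (vPol γ j 0)) :=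
      ((vPol_cont γ j).tendsto 0).mono_left nhdsWithin_le_nhds
    rwa [show vPol γ j 0 = 1 by rw [vPol_eq]; norm_num] at h
  have hw : Tendsto (fun r => wPol γ j r) (nhdsWithin 0 (Set.Ioi 0)) (nhds 0) := by
    have h : Tendsto (fun r => wPol γ j r) (nhdsWithin 0 (Set.Ioi 0)) (nhds (wPol γ j 0)) :=
      ((wPol_cont γ j).tendsto 0).mono_left nhdsWithin_le_nhds
    rwa [show wPol γ j 0 = 0 by rw [wPol_eq]; ring] at h
  have h := (hI0.neg.mul hv).add (hI1.mul hw)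
  rw [show -(1 : ℝ) * 1 + 0 * 0 = -1 by ring] at h
  exact h.congr fun r => by rw [phiF]

lemma tendsto_sumChi_phi (γ : ℝ) (hγ : γ ≠ 0) (n : ℕ) :
    Tendsto (fun r => sumChi n (fun j => phiF γ j r) / r ^ 2)
      (nhdsWithin 0 (Set.Ioi 0)) (nhds (-(γ ^ 2) / 2)) := by
  have hγr := tendsto_mul_right γ
  have hI0 : Tendsto (fun r => besselI0 (γ * r)) (nhdsWithin 0 (Set.Ioi 0)) (nhds 1) :=
    tendsto_besselI0.comp hγr
  have hG : Tendsto (fun r => besselG (γ * r)) (nhdsWithin 0 (Set.Ioi 0)) (nhds 1) :=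
    tendsto_besselG.comp hγr
  have hQv : Tendsto (fun r => sumChi n (fun j => vTail γ j r)) (nhdsWithin 0 (Set.Ioi 0))
      (nhds (sumChi n (fun j => acoef γ j 2))) := by
    have h : Tendsto (fun r => sumChi n (fun j => vTail γ j r)) (nhdsWithin 0 (Set.Ioi 0))
        (nhds (sumChi n (fun j => vTail γ j 0))) :=
      ((sumChi_cont n _ (vTail_cont γ)).tendsto 0).mono_left nhdsWithin_le_nhds
    rwa [sumChi_congr n _ _ (fun j => vTail_zero γ j)] at h
  have hQw : Tendsto (fun r => sumChi n (fun j => wTail γ j r)) (nhdsWithin 0 (Set.Ioi 0))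
      (nhds (sumChi n (fun j => acoef γ j 1))) := by
    have h : Tendsto (fun r => sumChi n (fun j => wTail γ j r)) (nhdsWithin 0 (Set.Ioi 0))
        (nhds (sumChi n (fun j => wTail γ j 0))) :=
      ((sumChi_cont n _ (wTail_cont γ)).tendsto 0).mono_left nhdsWithin_le_nhds
    rwa [sumChi_congr n _ _ (fun j => wTail_zero γ j)] at h
  have hN := (hI0.neg.mul hQv).add (((tendsto_const_nhds (x := γ / 2)).mul hG).mul hQw)
  have hval : -1 * sumChi n (fun j => acoef γ j 2)
      + γ / 2 * 1 * sumChi n (fun j => acoef γ j 1) = -(γ ^ 2) / 2 := by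
    have hA := sumChi_add n (fun j => -1 * acoef γ j 2) (fun j => γ / 2 * acoef γ j 1)
    have hm1 := sumChi_const_mul n (-1) (fun j => acoef γ j 2)
    have hm2 := sumChi_const_mul n (γ / 2) (fun j => acoef γ j 1)
    have he : sumChi n (fun j => -1 * acoef γ j 2 + γ / 2 * acoef γ j 1)
        = sumChi n (fun j => -(γ ^ 2) / 8 * ((j : ℝ) * ((j : ℝ) + 3))) := by
      refine sumChi_congr n _ _ fun j => ?_
      have := acoef_key γ hγ j
      linarith
    have hq := sumChi_const_mul n (-(γ ^ 2) / 8) (fun j => (j : ℝ) * ((j : ℝ) + 3))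
    rw [sumChi_quad] at hq
    rw [he, hq] at hA
    rw [hm1] at hA
    rw [hm2] at hA
    linarith
  rw [← hval]
  refine hN.congr' ?_
  filter_upwards [self_mem_nhdsWithin] with r hr
  have hr0 : r ≠ 0 := ne_of_gt hr
  have hphi : ∀ j, phiF γ j r = -besselI0 (γ * r) * 1
      + r ^ 2 * (-besselI0 (γ * r) * vTail γ j r + γ / 2 * besselG (γ * r) * wTail γ j r) := by
    intro j
    rw [phiF, vPol_eq, wPol_eq, besselI1_eq]
    ring
  rw [sumChi_congr n _ _ hphi, sumChi_add, sumChi_const_mul, sumChi_const_mul, sumChi_one,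
    sumChi_add, sumChi_const_mul, sumChi_const_mul]
  field_simp
  ring

-- ## eta limits

lemma tendsto_etaF1 (κ cs cp : ℝ) (hκ : 0 < κ) (hcs : 0 < cs) (hcp : 0 < cp) (n : ℕ) :
    Tendsto (etaF κ cs cp 1 n) (nhdsWithin 0 (Set.Ioi 0))
      (nhds (-(1 / 2) * (1 / cp ^ 2 + 1 / cs ^ 2))) := by
  have hs := tendsto_sumChi_phi (κ / cs) (by positivity) n
  have hp := tendsto_sumChi_phi (κ / cp) (by positivity) n
  have hφp := tendsto_phiF (κ / cp) n
  have hN := (((hs.sub hp).div_const (κ ^ 2)).add (hφp.const_mul (1 / cp ^ 2)))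
  have hval : (-((κ / cs) ^ 2) / 2 - -((κ / cp) ^ 2) / 2) / κ ^ 2 + 1 / cp ^ 2 * (-1)
      = -(1 / 2) * (1 / cp ^ 2 + 1 / cs ^ 2) := by
    field_simp
    ring
  rw [hval] at hN
  refine hN.congr' ?_
  filter_upwards [self_mem_nhdsWithin] with r hr
  have hr0 : (r : ℝ) ≠ 0 := ne_of_gt hr
  have hκ0 : κ ≠ 0 := ne_of_gt hκ
  unfold etaF
  rw [sumChi_sub]
  simp only [show (1-1:ℕ) = 0 from rfl, pow_zero, Nat.cast_one]
  field_simp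
  ring

lemma tendsto_etaF2 (κ cs cp : ℝ) (hκ : 0 < κ) (hcs : 0 < cs) (hcp : 0 < cp) (n : ℕ) :
    Tendsto (etaF κ cs cp 2 n) (nhdsWithin 0 (Set.Ioi 0)) (nhds 0) := by
  have hs := tendsto_sumChi_phi (κ / cs) (by positivity) n
  have hp := tendsto_sumChi_phi (κ / cp) (by positivity) n
  have hφp := tendsto_phiF (κ / cp) n
  have hφs := tendsto_phiF (κ / cs) n
  have hN := ((((hs.sub hp).div_const (κ ^ 2)).const_mul (-2)).add
    (hφp.const_mul (-1 / cp ^ 2))).add (hφs.const_mul (1 / cs ^ 2))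
  have hval : -2 * ((-((κ / cs) ^ 2) / 2 - -((κ / cp) ^ 2) / 2) / κ ^ 2)
      + -1 / cp ^ 2 * (-1) + 1 / cs ^ 2 * (-1) = 0 := by
    field_simp
    ring
  rw [hval] at hN
  refine hN.congr' ?_
  filter_upwards [self_mem_nhdsWithin] with r hr
  have hr0 : (r : ℝ) ≠ 0 := ne_of_gt hr
  have hκ0 : κ ≠ 0 := ne_of_gt hκ
  unfold etaF
  rw [sumChi_sub]
  simp only [show (2-1:ℕ) = 1 from rfl, pow_one, Nat.cast_ofNat]
  field_simp
  ring

-- ## norm facts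

lemma nrm2_pos (z : Fin 2 → ℝ) (hz : z ≠ 0) : 0 < nrm2 z := by
  have hpos : 0 < z 0 ^ 2 + z 1 ^ 2 := by
    rcases Function.ne_iff.mp hz with ⟨i0, hi0⟩
    have hi0' : z i0 ≠ 0 := by simpa using hi0
    fin_cases i0
    · have h1 : 0 < z 0 ^ 2 := (sq_nonneg _).lt_of_ne (Ne.symm (pow_ne_zero 2 hi0'))
      nlinarith [sq_nonneg (z 1)]
    · have h1 : 0 < z 1 ^ 2 := (sq_nonneg _).lt_of_ne (Ne.symm (pow_ne_zero 2 hi0'))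
      nlinarith [sq_nonneg (z 0)]
  exact Real.sqrt_pos.mpr hpos

lemma Jmat_abs_le (z : Fin 2 → ℝ) (hz : z ≠ 0) (i j : Fin 2) : |Jmat z i j| ≤ 1 := by
  have hpos : 0 < z 0 ^ 2 + z 1 ^ 2 := by
    have := nrm2_pos z hz
    unfold nrm2 at this
    nlinarith [Real.sq_sqrt (by positivity : (0:ℝ) ≤ z 0 ^ 2 + z 1 ^ 2), sq_nonneg (nrm2 z)]
  have hn : nrm2 z ^ 2 = z 0 ^ 2 + z 1 ^ 2 := Real.sq_sqrt hpos.le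
  have habs : ∀ i j : Fin 2, |z i * z j| ≤ z 0 ^ 2 + z 1 ^ 2 := by
    simp only [Fin.forall_fin_two]
    refine ⟨⟨?_, ?_⟩, ?_, ?_⟩ <;> refine abs_le.mpr ⟨?_, ?_⟩ <;>
      nlinarith [sq_nonneg (z 0 + z 1), sq_nonneg (z 0 - z 1), sq_nonneg (z 0), sq_nonneg (z 1)]
  unfold Jmat
  rw [abs_div, hn, abs_of_pos hpos, div_le_one hpos]
  exact habs i j


/-- Diagonal limit of the kernel (1/2)[η_{1,n}(|x(s)−x(σ)|) I + η_{2,n}(|x(s)−x(σ)|) J(x(s)−x(σ))]: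
as σ → s it tends to −(1/4)(1/c_p² + 1/c_s²) I. -/
theorem kernel_diagonal_limit (κ cs cp : ℝ) (hκ : 0 < κ) (hcs : 0 < cs) (hcp : 0 < cp)
    (n : ℕ) (x : ℝ → (Fin 2 → ℝ)) (hx : ContDiff ℝ 1 x) (s : ℝ) (hx' : deriv x s ≠ 0) :
    (∃ δ > (0 : ℝ), ∀ σ : ℝ, σ ≠ s → |σ - s| < δ → x σ ≠ x s) ∧
    Tendsto
      (fun σ : ℝ => fun i j : Fin 2 =>
        (1 / 2) * (etaF κ cs cp 1 n (nrm2 (x s - x σ)) * idm i j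
          + etaF κ cs cp 2 n (nrm2 (x s - x σ)) * Jmat (x s - x σ) i j))
      (nhdsWithin s {s}ᶜ)
      (nhds (fun i j : Fin 2 => -(1 / 4) * (1 / cp ^ 2 + 1 / cs ^ 2) * idm i j)) := by
  obtain ⟨i0, hi0⟩ : ∃ i, deriv x s i ≠ 0 := by
    by_contra h
    push_neg at h
    exact hx' (funext fun i => h i)
  have hdiff : Differentiable ℝ x := hx.differentiable one_ne_zero
  have hder : ∀ t, HasDerivAt (fun u => x u i0) (deriv x t i0) t := fun t =>
    (hasDerivAt_pi.mp (hdiff t).hasDerivAt) i0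
  have hcd : Continuous fun t => deriv x t i0 :=
    (continuous_apply i0).comp (hx.continuous_deriv le_rfl)
  set c := deriv x s i0 with hc
  have hcc : Continuous fun t => c * deriv x t i0 := continuous_const.mul hcd
  have hpos : 0 < c * deriv x s i0 := by rw [← hc]; exact mul_self_pos.mpr hi0
  have hmem : {t | 0 < c * deriv x t i0} ∈ nhds s :=
    (isOpen_lt continuous_const hcc).mem_nhds hpos
  obtain ⟨δ, hδpos, hball⟩ := Metric.mem_nhds_iff.mp hmem
  have hmono : StrictMonoOn (fun t => c * x t i0) (Metric.ball s δ) := by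
    apply strictMonoOn_of_deriv_pos (convex_ball s δ)
    · exact (continuous_const.mul ((continuous_apply i0).comp hx.continuous)).continuousOn
    · intro t ht
      rw [Metric.isOpen_ball.interior_eq] at ht
      have hdt : HasDerivAt (fun u => c * x u i0) (c * deriv x t i0) t :=
        (hder t).const_mul c
      rw [hdt.deriv]
      exact hball ht
  have part1 : ∀ σ : ℝ, σ ≠ s → |σ - s| < δ → x σ ≠ x s := by
    intro σ hσ hdist heq
    have hσb : σ ∈ Metric.ball s δ := by rw [Metric.mem_ball, Real.dist_eq]; exact hdist
    have hsb : s ∈ Metric.ball s δ := Metric.mem_ball_self hδpos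
    have hval : (fun t => c * x t i0) σ = (fun t => c * x t i0) s := by
      simp only [heq]
    exact hσ (hmono.injOn hσb hsb hval)
  have hevent : ∀ᶠ σ in nhdsWithin s {s}ᶜ, x σ ≠ x s := by
    have h1 : ∀ᶠ σ in nhds s, |σ - s| < δ := by
      filter_upwards [Metric.ball_mem_nhds s hδpos] with σ hσ
      rw [Metric.mem_ball, Real.dist_eq] at hσ
      exact hσ
    have h2 : ∀ᶠ σ in nhdsWithin s {s}ᶜ, σ ≠ s := by
      filter_upwards [self_mem_nhdsWithin] with σ hσ
      exact hσ
    filter_upwards [h1.filter_mono nhdsWithin_le_nhds, h2] with σ ha hb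
    exact part1 σ hb ha
  refine ⟨⟨δ, hδpos, part1⟩, ?_⟩
  have hcont_r : Continuous fun σ => nrm2 (x s - x σ) := by
    unfold nrm2
    apply Real.continuous_sqrt.comp
    have hsub : Continuous fun σ => x s - x σ := continuous_const.sub hx.continuous
    exact (((continuous_apply 0).comp hsub).pow 2).add (((continuous_apply 1).comp hsub).pow 2)
  have hr : Tendsto (fun σ => nrm2 (x s - x σ)) (nhdsWithin s {s}ᶜ)
      (nhdsWithin 0 (Set.Ioi 0)) := by
    rw [tendsto_nhdsWithin_iff]
    constructor
    · have h1 : Tendsto (fun σ => nrm2 (x s - x σ)) (nhds s) (nhds (nrm2 (x s - x s))) :=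
        hcont_r.tendsto s
      have h2 : nrm2 (x s - x s) = 0 := by simp [nrm2]
      rw [h2] at h1
      exact h1.mono_left nhdsWithin_le_nhds
    · filter_upwards [hevent] with σ hσ
      exact nrm2_pos _ (sub_ne_zero.mpr (Ne.symm hσ))
  have hE1 := (tendsto_etaF1 κ cs cp hκ hcs hcp n).comp hr
  have hE2 := (tendsto_etaF2 κ cs cp hκ hcs hcp n).comp hr
  rw [tendsto_pi_nhds]
  intro i
  rw [tendsto_pi_nhds]
  intro j
  have hzero : Tendsto (fun σ => etaF κ cs cp 2 n (nrm2 (x s - x σ)) * Jmat (x s - x σ) i j)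
      (nhdsWithin s {s}ᶜ) (nhds 0) := by
    have habs : Tendsto (fun σ => |etaF κ cs cp 2 n (nrm2 (x s - x σ))|)
        (nhdsWithin s {s}ᶜ) (nhds 0) := by
      have := hE2.abs
      simpa using this
    refine tendsto_of_tendsto_of_tendsto_of_le_of_le' (f := fun σ =>
        etaF κ cs cp 2 n (nrm2 (x s - x σ)) * Jmat (x s - x σ) i j)
      (by simpa using habs.neg) habs ?_ ?_
    · filter_upwards [hevent] with σ hσ
      have hJ := Jmat_abs_le (x s - x σ) (sub_ne_zero.mpr (Ne.symm hσ)) i j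
      calc -|etaF κ cs cp 2 n (nrm2 (x s - x σ))|
          ≤ -|etaF κ cs cp 2 n (nrm2 (x s - x σ)) * Jmat (x s - x σ) i j| := by
            rw [abs_mul]
            nlinarith [abs_nonneg (etaF κ cs cp 2 n (nrm2 (x s - x σ))),
              abs_nonneg (Jmat (x s - x σ) i j)]
        _ ≤ etaF κ cs cp 2 n (nrm2 (x s - x σ)) * Jmat (x s - x σ) i j := neg_abs_le _
    · filter_upwards [hevent] with σ hσ
      have hJ := Jmat_abs_le (x s - x σ) (sub_ne_zero.mpr (Ne.symm hσ)) i j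
      calc etaF κ cs cp 2 n (nrm2 (x s - x σ)) * Jmat (x s - x σ) i j
          ≤ |etaF κ cs cp 2 n (nrm2 (x s - x σ)) * Jmat (x s - x σ) i j| := le_abs_self _
        _ ≤ |etaF κ cs cp 2 n (nrm2 (x s - x σ))| := by
            rw [abs_mul]
            nlinarith [abs_nonneg (etaF κ cs cp 2 n (nrm2 (x s - x σ))),
              abs_nonneg (Jmat (x s - x σ) i j)]
  have hfinal := ((hE1.mul_const (idm i j)).add hzero).const_mul (1 / 2 : ℝ)
  convert hfinal using 2
  · simp only [Function.comp_apply]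
  · ring
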